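/- Fix $k \ge 1$ and a scaling factor $f \in [0,1)$. Suppose a player $n$ has target probability $\hat x_n$, the events $\{A_i\}_{i \in P}$ (seed acceptance events for overlapping earlier players) are mutually independent with $\mathbb{E}[\sum_{i \in P} \mathbb{I}_{A_i}] \le f \cdot k$, the seed event $A_n$ for player $n$ is independent of the $A_i$'s with $\mathbb{P}[A_n] = f \hat x_n$, and the allocation event $E_n$ satisfies $E_n \supseteq A_n \cap \{\sum_{i \in P} \mathbb{I}_{A_i} < k\}$. Then $\mathbb{P}[E_n] \ge f \cdot \left(1 - \exp\left(-\frac{(k - fk)^2}{fk + k}\right)\right) \cdot \hat x_n$. -/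

import Mathlib

open MeasureTheory ProbabilityTheory

lemma aux_hasDeriv (y : ℝ) (hy : 0 < y) :
    HasDerivAt (fun x => Real.log x - 2*(x-1)/(x+1)) (y⁻¹ - 4/(y+1)^2) y := by
  have h1 : HasDerivAt Real.log y⁻¹ y := Real.hasDerivAt_log hy.ne'
  have h2 : HasDerivAt (fun x : ℝ => 2*(x-1)) 2 y := by
    simpa using ((hasDerivAt_id y).sub_const 1).const_mul 2
  have h3 : HasDerivAt (fun x : ℝ => x+1) 1 y := (hasDerivAt_id y).add_const 1
  have hne : y + 1 ≠ 0 := by positivity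
  have h4 := h2.div h3 hne
  have h5 : (2*(y+1) - 2*(y-1)*1)/(y+1)^2 = 4/(y+1)^2 := by congr 1; ring
  have h6 := h1.sub h4
  rwa [h5] at h6

lemma aux_log {x : ℝ} (hx : 1 ≤ x) : 2*(x-1)/(x+1) ≤ Real.log x := by
  have key : MonotoneOn (fun y => Real.log y - 2*(y-1)/(y+1)) (Set.Ici 1) := by
    apply monotoneOn_of_deriv_nonneg (convex_Ici 1)
    · intro y hy
      exact ((aux_hasDeriv y (lt_of_lt_of_le one_pos hy)).continuousAt).continuousWithinAt
    · intro y hy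
      rw [interior_Ici] at hy
      exact ((aux_hasDeriv y (lt_trans one_pos hy)).differentiableAt).differentiableWithinAt
    · intro y hy
      rw [interior_Ici] at hy
      rw [(aux_hasDeriv y (lt_trans one_pos hy)).deriv]
      have h1 : (0:ℝ) < y := lt_trans one_pos hy
      rw [sub_nonneg, inv_eq_one_div, div_le_div_iff₀ (by positivity) h1]
      nlinarith [sq_nonneg (y-1)]
  have h := key Set.self_mem_Ici (Set.mem_Ici.2 hx) hx
  simp only [Real.log_one] at h
  norm_num at h
  linarith

lemma aux_core {f : ℝ} (hf0 : 0 < f) (hf1 : f < 1) (k : ℝ) (hk : 0 ≤ k) :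
    k * (Real.log f + 1 - f) ≤ -(k - f*k)^2/(f*k+k) := by
  rcases hk.eq_or_lt with rfl | hk
  · simp
  have hx : (1:ℝ) ≤ f⁻¹ := one_le_inv_iff₀.2 ⟨hf0, hf1.le⟩
  have h := aux_log hx
  rw [Real.log_inv] at h
  have heq : 2*(f⁻¹-1)/(f⁻¹+1) = 2*(1-f)/(1+f) := by
    rw [div_eq_div_iff (by positivity) (by positivity)]
    field_simp
  rw [heq] at h
  have hlog : Real.log f + 1 - f ≤ -((1-f)^2/(1+f)) := by
    have h2 : Real.log f ≤ -(2*(1-f)/(1+f)) := by linarith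
    have : 1 - f - 2*(1-f)/(1+f) = -((1-f)^2/(1+f)) := by
      field_simp
      ring
    linarith
  have : -(k - f*k)^2/(f*k+k) = k * (-((1-f)^2/(1+f))) := by
    rw [div_eq_iff (by positivity)]
    field_simp
    ring
  rw [this]
  exact mul_le_mul_of_nonneg_left hlog hk.le

theorem stmt_4 {Ω : Type*} [MeasureSpace Ω] [IsProbabilityMeasure (ℙ : Measure Ω)]
    (k : ℕ) (hk : 1 ≤ k) (f : ℝ) (hf : f ∈ Set.Ico (0:ℝ) 1)
    (xhat : ℝ) (hx : xhat ∈ Set.Icc (0:ℝ) 1)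
    {m : ℕ} (A : Fin m → Set Ω) (An En : Set Ω)
    (hAmeas : ∀ i, MeasurableSet (A i)) (hAnmeas : MeasurableSet An)
    (hEnmeas : MeasurableSet En)
    (hind : iIndepSet (fun o : Option (Fin m) => o.elim An A) ℙ)
    (hmean : ∑ i, (ℙ (A i)).toReal ≤ f * k)
    (hAn : ℙ An = ENNReal.ofReal (f * xhat))
    (hsub : An ∩ {ω | (∑ i, (A i).indicator (fun _ => (1:ℝ)) ω) < k} ⊆ En) :
    ENNReal.ofReal (f * (1 - Real.exp (-((k:ℝ) - f * k)^2 / (f * k + k))) * xhat) ≤ ℙ En := by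
  classical
  obtain ⟨hf0, hf1⟩ := hf
  obtain ⟨hx0, hx1⟩ := hx
  rcases hf0.eq_or_lt with hf0' | hf0'
  · simp [← hf0']
  -- notation
  set S : Ω → ℝ := fun ω => ∑ i, (A i).indicator (fun _ => (1:ℝ)) ω with hSdef
  set B : Set Ω := {ω | S ω < (k:ℝ)} with hBdef
  have hSmeas : Measurable S :=
    Finset.measurable_sum _ (fun i _ => measurable_const.indicator (hAmeas i))
  have hBmeas : MeasurableSet B := measurableSet_lt hSmeas measurable_const
  have hBc : Bᶜ = {ω | (k:ℝ) ≤ S ω} := by ext ω; simp [hBdef, not_lt]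
  -- independence of An and B
  have hgen_le : ∀ o : Option (Fin m),
      MeasurableSpace.generateFrom {(o.elim An A : Set Ω)} ≤ (inferInstance : MeasurableSpace Ω) := by
    intro o
    apply MeasurableSpace.generateFrom_le
    intro s hs
    rw [Set.mem_singleton_iff] at hs
    subst hs
    cases o with
    | none => exact hAnmeas
    | some i => exact hAmeas i
  have hindep2 := indep_biSup_compl hgen_le ((iIndepSet_iff_iIndep _ _).1 hind) {none}
  have hAn1 : MeasurableSet[⨆ o ∈ ({none} : Set (Option (Fin m))),
      MeasurableSpace.generateFrom {(Option.elim o An A)}] An := by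
    have h0 : MeasurableSet[MeasurableSpace.generateFrom
        {(Option.elim (none : Option (Fin m)) An A)}] An :=
      MeasurableSpace.measurableSet_generateFrom rfl
    exact MeasurableSpace.le_def.mp (le_biSup _ (Set.mem_singleton (none : Option (Fin m)))) An h0
  have hB2 : MeasurableSet[⨆ o ∈ ({none} : Set (Option (Fin m)))ᶜ,
      MeasurableSpace.generateFrom {(Option.elim o An A)}] B := by
    set M := ⨆ o ∈ ({none} : Set (Option (Fin m)))ᶜ,
      MeasurableSpace.generateFrom {(Option.elim o An A)} with hM
    have hA2 : ∀ i, MeasurableSet[M] (A i) := by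
      intro i
      have h0 : MeasurableSet[MeasurableSpace.generateFrom
          {(Option.elim (some i : Option (Fin m)) An A)}] (A i) :=
        MeasurableSpace.measurableSet_generateFrom rfl
      exact MeasurableSpace.le_def.mp (le_biSup _ (show (some i : Option (Fin m)) ∈ ({none} : Set (Option (Fin m)))ᶜ by simp)) (A i) h0
    have hSM : Measurable[M] S :=
      Finset.measurable_sum _ (fun i _ => Measurable.indicator measurable_const (hA2 i))
    exact measurableSet_lt hSM measurable_const
  have hprod : ℙ (An ∩ B) = ℙ An * ℙ B :=
    ((Indep_iff _ _ _).1 hindep2) An B hAn1 hB2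
  -- Chernoff setup
  have hindA : iIndepSet A ℙ := by
    rw [iIndepSet_iff_meas_biInter hAmeas]
    intro s
    have hall : ∀ o : Option (Fin m), MeasurableSet (Option.elim o An A) := by
      intro o; cases o with
      | none => exact hAnmeas
      | some i => exact hAmeas i
    have h := (iIndepSet_iff_meas_biInter hall).1 hind
      (s.map ⟨some, Option.some_injective _⟩)
    have h1 : (⋂ o ∈ s.map ⟨some, Option.some_injective _⟩, Option.elim o An A)
        = ⋂ i ∈ s, A i := by
      ext ω; simp [Finset.mem_map]
    have h2 : (∏ o ∈ s.map ⟨some, Option.some_injective _⟩, ℙ (Option.elim o An A))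
        = ∏ i ∈ s, ℙ (A i) := by
      rw [Finset.prod_map]
      rfl
    rw [h1, h2] at h
    exact h
  have hindX : iIndepFun
      (fun i => (A i).indicator (fun _ => (1:ℝ))) ℙ :=
    hindA.iIndepFun_indicator
  set t : ℝ := -Real.log f with htdef
  have ht : 0 ≤ t := by
    rw [htdef, neg_nonneg]
    exact Real.log_nonpos hf0'.le hf1.le
  have hexpt : Real.exp t = f⁻¹ := by
    rw [htdef, Real.exp_neg, Real.exp_log hf0']
  set p : Fin m → ℝ := fun i => (ℙ (A i)).toReal with hpdef
  have hp0 : ∀ i, 0 ≤ p i := fun i => ENNReal.toReal_nonneg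
  set Xi : Fin m → Ω → ℝ := fun i => (A i).indicator (fun _ => (1:ℝ)) with hXidef
  have hexp_eq : ∀ i, (fun ω => Real.exp (t * Xi i ω))
      = fun ω => (A i).indicator (fun _ => Real.exp t - 1) ω + 1 := by
    intro i; funext ω
    by_cases h : ω ∈ A i <;>
      simp [hXidef, Set.indicator_of_mem, Set.indicator_of_notMem, h]
  have hint : ∀ i, Integrable (fun ω => Real.exp (t * Xi i ω)) ℙ := by
    intro i; rw [hexp_eq i]
    exact ((integrable_const _).indicator (hAmeas i)).add (integrable_const 1)
  have hmgf_i : ∀ i, mgf (Xi i) ℙ t = 1 + (Real.exp t - 1) * p i := by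
    intro i
    rw [mgf, hexp_eq i, integral_add (((integrable_const _).indicator (hAmeas i)))
      (integrable_const 1), integral_indicator_const _ (hAmeas i), integral_const]
    simp [hpdef, smul_eq_mul, measureReal_def]
    ring
  have hSsum : S = ∑ i, Xi i := by
    funext ω
    rw [hSdef, Finset.sum_apply]
  have hmgfS : mgf S ℙ t = ∏ i, mgf (Xi i) ℙ t := by
    rw [hSsum]
    exact hindX.mgf_sum (fun i => measurable_const.indicator (hAmeas i)) _
  have hmgfS_le : mgf S ℙ t ≤ Real.exp ((Real.exp t - 1) * (f * k)) := by
    rw [hmgfS]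
    have h1 : ∀ i ∈ Finset.univ, mgf (Xi i) ℙ t ≤ Real.exp ((Real.exp t - 1) * p i) := by
      intro i _
      rw [hmgf_i i]
      have := Real.add_one_le_exp ((Real.exp t - 1) * p i)
      linarith
    have h2 : (∏ i, mgf (Xi i) ℙ t) ≤ ∏ i, Real.exp ((Real.exp t - 1) * p i) := by
      apply Finset.prod_le_prod
      · intro i _
        rw [hmgf_i i]
        have h3 : 0 ≤ (Real.exp t - 1) * p i :=
          mul_nonneg (by linarith [Real.one_le_exp ht]) (hp0 i)
        linarith
      · exact h1
    refine h2.trans ?_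
    rw [← Real.exp_sum]
    apply Real.exp_le_exp.2
    rw [← Finset.mul_sum]
    apply mul_le_mul_of_nonneg_left hmean (by linarith [Real.one_le_exp ht])
  have hintS : Integrable (fun ω => Real.exp (t * S ω)) ℙ := by
    apply Integrable.mono' (integrable_const (Real.exp (t * m)))
    · exact (hSmeas.const_mul t).exp.aestronglyMeasurable
    · refine Filter.Eventually.of_forall fun ω => ?_
      rw [Real.norm_eq_abs, abs_of_pos (Real.exp_pos _)]
      apply Real.exp_le_exp.2
      apply mul_le_mul_of_nonneg_left _ ht
      calc S ω ≤ ∑ _i : Fin m, (1:ℝ) := by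
            apply Finset.sum_le_sum
            intro i _
            by_cases h : ω ∈ A i <;> simp [Set.indicator_of_mem, Set.indicator_of_notMem, h]
        _ = m := by simp
  -- the tail bound
  have hchern : (ℙ Bᶜ).toReal ≤ Real.exp (-(((k:ℝ) - f * k)^2) / (f * k + k)) := by
    rw [hBc]
    have h1 := measure_ge_le_exp_mul_mgf (X := S) (μ := ℙ) (k:ℝ) ht hintS
    refine h1.trans ?_
    calc Real.exp (-t * k) * mgf S ℙ t
        ≤ Real.exp (-t * k) * Real.exp ((Real.exp t - 1) * (f * k)) := by
          apply mul_le_mul_of_nonneg_left hmgfS_le (Real.exp_pos _).le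
      _ = Real.exp ((k:ℝ) * (Real.log f + 1 - f)) := by
          rw [← Real.exp_add, hexpt, htdef]
          congr 1
          field_simp
          ring
      _ ≤ Real.exp (-(((k:ℝ) - f * k)^2) / (f * k + k)) := by
          apply Real.exp_le_exp.2
          have := aux_core hf0' hf1 (k:ℝ) (by positivity)
          calc (k:ℝ) * (Real.log f + 1 - f) ≤ -((k:ℝ) - f*k)^2/(f*k+(k:ℝ)) := this
            _ = -(((k:ℝ) - f * k)^2) / (f * k + k) := by rw [neg_div]
  -- assemble
  have hkpos : (0:ℝ) < k := by exact_mod_cast hk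
  have hBtoReal : (ℙ B).toReal = 1 - (ℙ Bᶜ).toReal := by
    have h1 : ℙ B + ℙ Bᶜ = 1 := by rw [measure_add_measure_compl hBmeas, measure_univ]
    have h2 := congrArg ENNReal.toReal h1
    rw [ENNReal.toReal_add (measure_ne_top _ _) (measure_ne_top _ _)] at h2
    simp at h2
    linarith
  set c : ℝ := Real.exp (-(((k:ℝ) - f * k)^2) / (f * k + k)) with hcdef
  have hc1 : c ≤ 1 := by
    rw [hcdef, ← Real.exp_zero]
    apply Real.exp_le_exp.2
    apply div_nonpos_of_nonpos_of_nonneg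
    · simp [sq_nonneg]
    · positivity
  have hBlb : 1 - c ≤ (ℙ B).toReal := by rw [hBtoReal]; linarith
  have hfinal : f * (1 - c) * xhat ≤ (ℙ En).toReal := by
    have h1 : (ℙ (An ∩ B)).toReal ≤ (ℙ En).toReal :=
      ENNReal.toReal_mono (measure_ne_top _ _) (measure_mono hsub)
    have h2 : (ℙ (An ∩ B)).toReal = (f * xhat) * (ℙ B).toReal := by
      rw [hprod, ENNReal.toReal_mul, hAn, ENNReal.toReal_ofReal (by positivity)]
    have h3 : f * (1 - c) * xhat ≤ (f * xhat) * (ℙ B).toReal := by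
      have hfx : 0 ≤ f * xhat := by positivity
      calc f * (1 - c) * xhat = (f * xhat) * (1 - c) := by ring
        _ ≤ (f * xhat) * (ℙ B).toReal := mul_le_mul_of_nonneg_left hBlb hfx
    linarith
  calc ENNReal.ofReal (f * (1 - Real.exp (-((k:ℝ) - f * k)^2 / (f * k + k))) * xhat)
      ≤ ENNReal.ofReal ((ℙ En).toReal) := ENNReal.ofReal_le_ofReal hfinal
    _ = ℙ En := ENNReal.ofReal_toReal (measure_ne_top _ _)
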